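/- Let X and Y be topological spaces and let Ψ : O(X) → O(Y) satisfy (I₀): Ψ(X) = Y and Ψ(∅) = ∅; (II₀): Ψ(U ∩ V) = Ψ(U) ∩ Ψ(V) for all open U, V ⊆ X; and (III): Ψ(⋃_α U_α) = ⋃_α Ψ(U_α) for every family of open sets. Let Φ(V) := ⋃{U ∈ O(X) : Ψ(U) ⊆ V} be the pseudo-left-inverse of Ψ. Then for every nonempty closed irreducible subset F ⊆ Y, the set X \ Φ(Y \ F) is a nonempty closed irreducible subset of X. -/

import Mathlib

open TopologicalSpace

/-- If `Ψ : O(X) → O(Y)` satisfies (I₀), (II₀) and (III) and `Φ` is its pseudo-left-inverse,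
then for every nonempty closed irreducible `F ⊆ Y`, the set `X \ Φ(Y \ F)` is a nonempty
closed irreducible subset of `X`. -/
theorem stmt1 {X Y : Type*} [TopologicalSpace X] [TopologicalSpace Y]
    (Ψ : Opens X → Opens Y) (Φ : Opens Y → Opens X)
    (hI₀ : Ψ ⊤ = ⊤ ∧ Ψ ⊥ = ⊥)
    (hII₀ : ∀ U V : Opens X, Ψ (U ⊓ V) = Ψ U ⊓ Ψ V)
    (hIII : ∀ S : Set (Opens X), Ψ (sSup S) = sSup (Ψ '' S))
    (hΦ : ∀ V : Opens Y, Φ V = sSup {U : Opens X | Ψ U ≤ V})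
    (F : Set Y) (hFc : IsClosed F) (hFirr : IsIrreducible F) :
    IsClosed ((Φ ⟨Fᶜ, hFc.isOpen_compl⟩ : Set X)ᶜ) ∧
      IsIrreducible ((Φ ⟨Fᶜ, hFc.isOpen_compl⟩ : Set X)ᶜ) := by
  obtain ⟨hI₁, hI₂⟩ := hI₀
  set V : Opens Y := ⟨Fᶜ, hFc.isOpen_compl⟩ with hV
  have hmono : ∀ U W : Opens X, U ≤ W → Ψ U ≤ Ψ W := by
    intro U W h
    have he : U ⊓ W = U := inf_eq_left.mpr h
    calc Ψ U = Ψ (U ⊓ W) := by rw [he]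
    _ ≤ Ψ W := by rw [hII₀]; exact inf_le_right
  have hΨΦ : Ψ (Φ V) ≤ V := by
    rw [hΦ, hIII]
    apply sSup_le
    rintro _ ⟨U, hU, rfl⟩
    exact hU
  have hiff : ∀ U : Opens X, U ≤ Φ V ↔ Ψ U ≤ V := by
    intro U
    constructor
    · intro h; exact le_trans (hmono _ _ h) hΨΦ
    · intro h; rw [hΦ]; exact le_sSup h
  refine ⟨(Φ V).isOpen.isClosed_compl, ?_, ?_⟩
  · -- nonempty
    rw [Set.nonempty_compl]
    intro h
    have htop : (⊤ : Opens X) ≤ Φ V := by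
      intro x _
      exact (show x ∈ (Φ V : Set X) by rw [h]; exact Set.mem_univ x)
    have h2 : Ψ ⊤ ≤ V := (hiff ⊤).mp htop
    rw [hI₁] at h2
    obtain ⟨y, hy⟩ := hFirr.nonempty
    exact h2 (Set.mem_univ y) hy
  · -- preirreducible
    intro u v hu hv h1 h2
    have key : ∀ (w : Set X) (hw : IsOpen w),
        ((Φ V : Set X)ᶜ ∩ w).Nonempty → (F ∩ (Ψ ⟨w, hw⟩ : Set Y)).Nonempty := by
      intro w hw ⟨x, hxc, hxw⟩
      by_contra hemp
      have hle : Ψ ⟨w, hw⟩ ≤ V := by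
        intro y hy
        simp only [hV, Opens.coe_mk, Set.mem_compl_iff]
        intro hyF
        exact hemp ⟨y, hyF, hy⟩
      exact hxc ((hiff ⟨w, hw⟩).mpr hle hxw)
    have h1' := key u hu h1
    have h2' := key v hv h2
    obtain ⟨y, hyF, hyu, hyv⟩ := hFirr.2 _ _ (Ψ ⟨u, hu⟩).isOpen (Ψ ⟨v, hv⟩).isOpen h1' h2'
    have huv : ¬ Ψ (⟨u, hu⟩ ⊓ ⟨v, hv⟩) ≤ V := by
      intro hle
      have : y ∈ (V : Set Y) := hle (by rw [hII₀]; exact ⟨hyu, hyv⟩)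
      exact this hyF
    have : ¬ (⟨u, hu⟩ ⊓ ⟨v, hv⟩ : Opens X) ≤ Φ V := fun h => huv ((hiff _).mp h)
    rw [SetLike.le_def] at this
    push_neg at this
    obtain ⟨x, hx, hxn⟩ := this
    exact ⟨x, hxn, hx⟩
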